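/- Let b be an S-regular graph over (X,m) for some S > 0, let λ > 0, and let ψ : X → ℝ be finitely supported with ‖Γ(ψ)‖_∞ ≤ 1. Then for every x ∈ X, (1/m(x)) · Σ_y b(x,y)·(cosh(λ·(ψ(x) − ψ(y))) − 1) ≤ (2/S²)·(cosh(λS) − 1). -/

import Mathlib

noncomputable section

/-- The energy density `Γ(f)(x) = (1/(2m(x))) Σ_y b(x,y)(f(x) − f(y))²`. -/
def gammaDensity {X : Type*} (b : X → X → ℝ) (m : X → ℝ) (f : X → ℝ) (x : X) : ℝ :=
  (2 * m x)⁻¹ * ∑' y, b x y * (f x - f y) ^ 2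

/-- A graph is `S`-regular if `|ψ(x) − ψ(y)| ≤ S` for all neighbors `x ~ y` and every finitely
supported `ψ` with `‖Γ(ψ)‖_∞ ≤ 1`. -/
def SRegular {X : Type*} (b : X → X → ℝ) (m : X → ℝ) (S : ℝ) : Prop :=
  ∀ ψ : X → ℝ, (Function.support ψ).Finite → (∀ z, gammaDensity b m ψ z ≤ 1) →
    ∀ x y, 0 < b x y → |ψ x - ψ y| ≤ S

lemma aux1 : ∀ s : ℝ, 0 ≤ s → Real.sinh s ≤ s * Real.cosh s := by
  have hmono : MonotoneOn (fun s : ℝ => s * Real.cosh s - Real.sinh s) (Set.Ici 0) := by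
    apply monotoneOn_of_deriv_nonneg (convex_Ici 0)
    · fun_prop
    · apply Differentiable.differentiableOn
      fun_prop
    · intro t ht
      have h : HasDerivAt (fun s : ℝ => s * Real.cosh s - Real.sinh s)
          (1 * Real.cosh t + t * Real.sinh t - Real.cosh t) t :=
        ((hasDerivAt_id t).mul (Real.hasDerivAt_cosh t)).sub (Real.hasDerivAt_sinh t)
      rw [h.deriv]
      have ht' : 0 ≤ t := le_of_lt (by simpa using ht)
      have hsp : 0 ≤ Real.sinh t := by
        rcases eq_or_lt_of_le ht' with h|h
        · simp [← h]
        · exact (Real.sinh_pos_iff.mpr h).le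
      nlinarith
  intro s hs
  have := hmono (Set.mem_Ici.mpr (le_refl (0:ℝ))) (Set.mem_Ici.mpr hs) hs
  simp only [Real.cosh_zero, Real.sinh_zero, zero_mul, sub_zero, sub_nonneg] at this
  linarith [this]

lemma aux2 : ∀ s : ℝ, 0 ≤ s → 2 * (Real.cosh s - 1) ≤ s * Real.sinh s := by
  have hmono : MonotoneOn (fun s : ℝ => s * Real.sinh s - 2 * (Real.cosh s - 1)) (Set.Ici 0) := by
    apply monotoneOn_of_deriv_nonneg (convex_Ici 0)
    · fun_prop
    · apply Differentiable.differentiableOn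
      fun_prop
    · intro t ht
      have h := ((hasDerivAt_id t).mul (Real.hasDerivAt_sinh t)).sub
          (((Real.hasDerivAt_cosh t).sub_const 1).const_mul 2)
      simp only [id_eq] at h
      rw [show deriv (fun s : ℝ => s * Real.sinh s - 2 * (Real.cosh s - 1)) t = _ from h.deriv]
      have ht' : 0 ≤ t := le_of_lt (by simpa using ht)
      have := aux1 t ht'
      nlinarith
  intro s hs
  have := hmono (Set.mem_Ici.mpr (le_refl (0:ℝ))) (Set.mem_Ici.mpr hs) hs
  simp only [Real.sinh_zero, Real.cosh_zero, mul_zero, sub_self, sub_zero, zero_sub,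
    neg_nonpos] at this
  nlinarith [this]

lemma aux3 : ∀ a c : ℝ, 0 ≤ a → a ≤ c →
    c ^ 2 * (Real.cosh a - 1) ≤ a ^ 2 * (Real.cosh c - 1) := by
  have hmono : MonotoneOn (fun t : ℝ => (Real.cosh t - 1) / t ^ 2) (Set.Ioi 0) := by
    apply monotoneOn_of_deriv_nonneg (convex_Ioi 0)
    · apply ContinuousOn.div
      · fun_prop
      · fun_prop
      · intro t ht
        exact pow_ne_zero 2 (ne_of_gt (by simpa using ht))
    · rw [interior_Ioi]
      intro t ht
      have ht0 : (0:ℝ) < t := by simpa using ht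
      have h := HasDerivAt.div ((Real.hasDerivAt_cosh t).sub_const 1) (hasDerivAt_pow 2 t)
          (pow_ne_zero 2 (ne_of_gt ht0))
      exact h.differentiableAt.differentiableWithinAt
    · rw [interior_Ioi]
      intro t ht
      have ht0 : (0:ℝ) < t := by simpa using ht
      have h := HasDerivAt.div ((Real.hasDerivAt_cosh t).sub_const 1) (hasDerivAt_pow 2 t)
          (pow_ne_zero 2 (ne_of_gt ht0))
      rw [show deriv (fun t : ℝ => (Real.cosh t - 1) / t ^ 2) t = _ from h.deriv]
      push_cast
      apply div_nonneg _ (by positivity)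
      have := aux2 t (le_of_lt ht0)
      nlinarith
  intro a c ha hac
  rcases eq_or_lt_of_le ha with h0 | h0
  · simp [← h0]
  · have hc : (0:ℝ) < c := lt_of_lt_of_le h0 hac
    have := hmono (Set.mem_Ioi.mpr h0) (Set.mem_Ioi.mpr hc) hac
    rw [div_le_div_iff₀ (by positivity) (by positivity)] at this
    nlinarith [this]

theorem stmt10 {X : Type*} [Countable X]
    (b : X → X → ℝ) (m : X → ℝ)
    (hb_nonneg : ∀ x y, 0 ≤ b x y) (hb_symm : ∀ x y, b x y = b y x)
    (hb_loop : ∀ x, b x x = 0)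
    (hlf : ∀ x, (Function.support (b x)).Finite)
    (hm_pos : ∀ x, 0 < m x)
    (S : ℝ) (hS : 0 < S) (hreg : SRegular b m S)
    (l : ℝ) (hl : 0 < l)
    (ψ : X → ℝ) (hψ_fin : (Function.support ψ).Finite)
    (hψ_Γ : ∀ z, gammaDensity b m ψ z ≤ 1) :
    ∀ x : X, (m x)⁻¹ * ∑' y, b x y * (Real.cosh (l * (ψ x - ψ y)) - 1) ≤
      2 / S ^ 2 * (Real.cosh (l * S) - 1) := by
  intro x
  set C : ℝ := Real.cosh (l * S) - 1 with hC
  have hC0 : 0 ≤ C := by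
    have := Real.one_le_cosh (l * S)
    linarith
  set F : Finset X := (hlf x).toFinset with hF
  have hmem : ∀ y, y ∉ F → b x y = 0 := by
    intro y hy
    by_contra h
    exact hy (by simp [hF, Function.mem_support, h])
  -- rewrite tsums as finite sums
  have h1 : (∑' y, b x y * (Real.cosh (l * (ψ x - ψ y)) - 1)) =
      ∑ y ∈ F, b x y * (Real.cosh (l * (ψ x - ψ y)) - 1) := by
    apply tsum_eq_sum
    intro y hy
    rw [hmem y hy, zero_mul]
  have h2 : (∑' y, b x y * (ψ x - ψ y) ^ 2) = ∑ y ∈ F, b x y * (ψ x - ψ y) ^ 2 := by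
    apply tsum_eq_sum
    intro y hy
    rw [hmem y hy, zero_mul]
  -- bound of the energy
  have hE : (∑ y ∈ F, b x y * (ψ x - ψ y) ^ 2) ≤ 2 * m x := by
    have := hψ_Γ x
    rw [gammaDensity, h2] at this
    have hm : (0:ℝ) < 2 * m x := by linarith [hm_pos x]
    calc (∑ y ∈ F, b x y * (ψ x - ψ y) ^ 2)
        = (2 * m x) * ((2 * m x)⁻¹ * ∑ y ∈ F, b x y * (ψ x - ψ y) ^ 2) := by
          field_simp
          rw [mul_div_cancel_right₀ _ (ne_of_gt (hm_pos x))]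
      _ ≤ (2 * m x) * 1 := by
          apply mul_le_mul_of_nonneg_left this (le_of_lt hm)
      _ = 2 * m x := by ring
  -- pointwise bound
  have hpt : ∀ y, b x y * (Real.cosh (l * (ψ x - ψ y)) - 1) ≤
      C / S ^ 2 * (b x y * (ψ x - ψ y) ^ 2) := by
    intro y
    rcases eq_or_lt_of_le (hb_nonneg x y) with hb0 | hb0
    · rw [← hb0]; simp
    · have habs : |ψ x - ψ y| ≤ S := hreg ψ hψ_fin hψ_Γ x y hb0
      set d : ℝ := ψ x - ψ y with hd
      have hkey : S ^ 2 * (Real.cosh (l * |d|) - 1) ≤ |d| ^ 2 * C := by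
        have := aux3 (l * |d|) (l * S) (by positivity)
          (by apply mul_le_mul_of_nonneg_left habs (le_of_lt hl))
        have h2 : (l * S) ^ 2 * (Real.cosh (l * |d|) - 1) ≤ (l * |d|) ^ 2 * C := this
        nlinarith [h2, mul_pos hl hl]
      have hcosh : Real.cosh (l * d) = Real.cosh (l * |d|) := by
        rcases abs_cases d with ⟨h, _⟩ | ⟨h, _⟩
        · rw [h]
        · rw [h, mul_neg, Real.cosh_neg]
      have hsq : |d| ^ 2 = d ^ 2 := sq_abs d
      have : Real.cosh (l * d) - 1 ≤ C / S ^ 2 * d ^ 2 := by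
        rw [hcosh, div_mul_eq_mul_div, le_div_iff₀ (by positivity)]
        nlinarith [hkey]
      calc b x y * (Real.cosh (l * d) - 1) ≤ b x y * (C / S ^ 2 * d ^ 2) :=
            mul_le_mul_of_nonneg_left this (le_of_lt hb0)
        _ = C / S ^ 2 * (b x y * d ^ 2) := by ring
  -- combine
  rw [h1]
  have hsum : (∑ y ∈ F, b x y * (Real.cosh (l * (ψ x - ψ y)) - 1)) ≤
      C / S ^ 2 * (2 * m x) := by
    calc (∑ y ∈ F, b x y * (Real.cosh (l * (ψ x - ψ y)) - 1))
        ≤ ∑ y ∈ F, C / S ^ 2 * (b x y * (ψ x - ψ y) ^ 2) :=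
          Finset.sum_le_sum fun y _ => hpt y
      _ = C / S ^ 2 * ∑ y ∈ F, b x y * (ψ x - ψ y) ^ 2 := by rw [Finset.mul_sum]
      _ ≤ C / S ^ 2 * (2 * m x) := by
          apply mul_le_mul_of_nonneg_left hE (by positivity)
  have hmx : (0:ℝ) < m x := hm_pos x
  calc (m x)⁻¹ * ∑ y ∈ F, b x y * (Real.cosh (l * (ψ x - ψ y)) - 1)
      ≤ (m x)⁻¹ * (C / S ^ 2 * (2 * m x)) := by
        apply mul_le_mul_of_nonneg_left hsum (by positivity)
    _ = 2 / S ^ 2 * C := by field_simp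

end
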